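/- Let P be a polynomial in variables z^{(a)}, z^{(b)}, z^{(c)} (and possibly more variables). Let D_{b,c} be the largest power of (z^{(b)}-z^{(c)}) dividing P. Let P_der be the coefficient of (z^{(b)}-z^{(c)})^{D_{b,c}} in the expansion of P in powers of (z^{(b)}-z^{(c)}), where P is rewritten in terms of z^{(b)}-z^{(c)} and the weighted center of mass z^{(b+c)} = (b·z^{(b)} + c·z^{(c)})/(b+c). Let D_{a,b} and D_{a,c} be the largest powers of (z^{(a)}-z^{(b)}) and (z^{(a)}-z^{(c)}) dividing P, and let D_{a,b+c} be the largest power of (z^{(a)}-z^{(b+c)}) dividing P_der. Then D_{a,b+c} ≥ D_{a,b} + D_{a,c}. -/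

import Mathlib

open MvPolynomial

noncomputable section

/-- concavity: for a polynomial in the cluster variables
`z^{(a)} = X (inl 0)`, `z^{(b)} = X (inl 1)`, `z^{(c)} = X (inl 2)` and possibly
more variables (indexed by `σ`), with `D_{a,b}, D_{a,c}` the orders of vanishing
of `P` along `z^{(a)} = z^{(b)}` and `z^{(a)} = z^{(c)}`, and `D_{a,b+c}` the
order of vanishing along `z^{(a)} = z^{(b+c)}` of the derived polynomial `Pder`
(the coefficient of the minimal power `(z^{(b)}-z^{(c)})^{D_{b,c}}` after
rewriting in terms of `w = z^{(b)}-z^{(c)}` and the weighted center of mass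
`z^{(b+c)} = (b z^{(b)} + c z^{(c)})/(b+c)`), one has `D_{a,b+c} ≥ D_{a,b} + D_{a,c}`.
In the rewritten coordinates the slot `inl 1` holds `w` and `inl 2` holds `z^{(b+c)}`. -/
lemma prime_X_mv {τ : Type*} [DecidableEq τ] (i : τ) :
    Prime (X i : MvPolynomial τ ℂ) := by
  let Φ := (renameEquiv ℂ (Equiv.optionSubtypeNe i).symm).trans
    (optionEquivLeft ℂ {b : τ // b ≠ i})
  refine (MulEquiv.prime_iff Φ).mp ?_
  have hΦ : Φ (X i) = Polynomial.X := by
    simp [Φ, Equiv.optionSubtypeNe_symm_self, optionEquivLeft_X_none]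
  show Prime (Φ _)
  rw [hΦ]
  exact Polynomial.prime_X

lemma prime_lin {τ : Type*} [DecidableEq τ] {i j k : τ} (hji : j ≠ i) (hki : k ≠ i) (u : ℂ) :
    Prime (X i - (X j + C u * X k) : MvPolynomial τ ℂ) := by
  let Φ := (renameEquiv ℂ (Equiv.optionSubtypeNe i).symm).trans
    (optionEquivLeft ℂ {b : τ // b ≠ i})
  refine (MulEquiv.prime_iff Φ).mp ?_
  have hΦ : Φ (X i - (X j + C u * X k)) =
      Polynomial.X - Polynomial.C (X ⟨j, hji⟩ + C u * X ⟨k, hki⟩) := by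
    simp [Φ, map_sub, map_add, map_mul, Equiv.optionSubtypeNe_symm_self,
      Equiv.optionSubtypeNe_symm_of_ne hji, Equiv.optionSubtypeNe_symm_of_ne hki,
      optionEquivLeft_X_none, optionEquivLeft_X_some, optionEquivLeft_C]
  show Prime (Φ _)
  rw [hΦ]
  exact Polynomial.prime_X_sub_C _

theorem stmt1 {σ : Type*} [DecidableEq σ] (a b c : ℕ) (ha : 0 < a) (hb : 0 < b) (hc : 0 < c)
    (P : MvPolynomial (Fin 3 ⊕ σ) ℂ)
    (Dab Dac Dbc Dabc : ℕ)
    (hDab : (X (Sum.inl 0) - X (Sum.inl 1) : MvPolynomial (Fin 3 ⊕ σ) ℂ) ^ Dab ∣ P ∧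
      ¬ (X (Sum.inl 0) - X (Sum.inl 1) : MvPolynomial (Fin 3 ⊕ σ) ℂ) ^ (Dab + 1) ∣ P)
    (hDac : (X (Sum.inl 0) - X (Sum.inl 2) : MvPolynomial (Fin 3 ⊕ σ) ℂ) ^ Dac ∣ P ∧
      ¬ (X (Sum.inl 0) - X (Sum.inl 2) : MvPolynomial (Fin 3 ⊕ σ) ℂ) ^ (Dac + 1) ∣ P)
    (M : MvPolynomial (Fin 3 ⊕ σ) ℂ)
    (hM : MvPolynomial.aeval (fun v : Fin 3 ⊕ σ =>
        if v = Sum.inl 1 then X (Sum.inl 2) + MvPolynomial.C ((c : ℂ) / (b + c)) * X (Sum.inl 1)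
        else if v = Sum.inl 2 then X (Sum.inl 2) - MvPolynomial.C ((b : ℂ) / (b + c)) * X (Sum.inl 1)
        else X v) P = X (Sum.inl 1) ^ Dbc * M)
    (hMmax : ¬ (X (Sum.inl 1) : MvPolynomial (Fin 3 ⊕ σ) ℂ) ∣ M)
    (Pder : MvPolynomial (Fin 3 ⊕ σ) ℂ)
    (hPder : Pder = MvPolynomial.aeval (fun v : Fin 3 ⊕ σ =>
        if v = Sum.inl 1 then 0 else X v) M)
    (hDabc : (X (Sum.inl 0) - X (Sum.inl 2) : MvPolynomial (Fin 3 ⊕ σ) ℂ) ^ Dabc ∣ Pder ∧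
      ¬ (X (Sum.inl 0) - X (Sum.inl 2) : MvPolynomial (Fin 3 ⊕ σ) ℂ) ^ (Dabc + 1) ∣ Pder) :
    Dab + Dac ≤ Dabc := by
  classical
  have hbc : ((b : ℂ) + c) ≠ 0 := by
    have : ((b + c : ℕ) : ℂ) ≠ 0 := Nat.cast_ne_zero.mpr (by omega)
    simpa using this
  set c' : ℂ := (c : ℂ) / ((b : ℂ) + c) with hc'def
  set b' : ℂ := (b : ℂ) / ((b : ℂ) + c) with hb'def
  let φ : MvPolynomial (Fin 3 ⊕ σ) ℂ →ₐ[ℂ] MvPolynomial (Fin 3 ⊕ σ) ℂ :=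
    MvPolynomial.aeval (fun v : Fin 3 ⊕ σ =>
      if v = Sum.inl 1 then X (Sum.inl 2) + MvPolynomial.C ((c : ℂ) / (b + c)) * X (Sum.inl 1)
      else if v = Sum.inl 2 then X (Sum.inl 2) - MvPolynomial.C ((b : ℂ) / (b + c)) * X (Sum.inl 1)
      else X v)
  let ev0 : MvPolynomial (Fin 3 ⊕ σ) ℂ →ₐ[ℂ] MvPolynomial (Fin 3 ⊕ σ) ℂ :=
    MvPolynomial.aeval (fun v : Fin 3 ⊕ σ => if v = Sum.inl 1 then 0 else X v)
  set p1 : MvPolynomial (Fin 3 ⊕ σ) ℂ :=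
    X (Sum.inl 0) - (X (Sum.inl 2) + C c' * X (Sum.inl 1)) with hp1def
  set p2 : MvPolynomial (Fin 3 ⊕ σ) ℂ :=
    X (Sum.inl 0) - (X (Sum.inl 2) + C (-b') * X (Sum.inl 1)) with hp2def
  have n01 : ¬ (Sum.inl 0 : Fin 3 ⊕ σ) = Sum.inl 1 := by simp
  have n02 : ¬ (Sum.inl 0 : Fin 3 ⊕ σ) = Sum.inl 2 := by simp
  have n21 : ¬ (Sum.inl 2 : Fin 3 ⊕ σ) = Sum.inl 1 := by simp
  have n12 : ¬ (Sum.inl 1 : Fin 3 ⊕ σ) = Sum.inl 2 := by simp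
  set w : MvPolynomial (Fin 3 ⊕ σ) ℂ := X (Sum.inl 1) with hwdef
  have h02 : (Sum.inl 0 : Fin 3 ⊕ σ) ≠ Sum.inl 2 := by simp
  have hp1prime : Prime p1 := prime_lin (by simp) (by simp) c'
  have hp2prime : Prime p2 := prime_lin (by simp) (by simp) (-b')
  have hwprime : Prime w := prime_X_mv _
  -- images under φ
  have hφ1 : φ (X (Sum.inl 0) - X (Sum.inl 1)) = p1 := by
    rw [hp1def, hwdef, hc'def]
    simp [φ, n01, n02, n21, n12]
  have hφ2 : φ (X (Sum.inl 0) - X (Sum.inl 2)) = p2 := by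
    rw [hp2def, hwdef, hb'def]
    simp [φ, n01, n02, n21, n12, map_neg]
    ring
  have hφP : φ P = w ^ Dbc * M := hM
  -- images under ev0
  have he1 : ev0 p1 = X (Sum.inl 0) - X (Sum.inl 2) := by
    rw [hp1def, hwdef]
    simp [ev0, n01, n02, n21, n12]
  have he2 : ev0 p2 = X (Sum.inl 0) - X (Sum.inl 2) := by
    rw [hp2def, hwdef]
    simp [ev0, n01, n02, n21, n12, map_neg]
  have hew : ev0 w = 0 := by rw [hwdef]; simp [ev0]
  have hxz : (X (Sum.inl 0) - X (Sum.inl 2) : MvPolynomial (Fin 3 ⊕ σ) ℂ) ≠ 0 :=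
    sub_ne_zero.mpr (X_injective.ne h02)
  -- w does not divide p1 or p2
  have hwp1 : ¬ w ∣ p1 := by
    intro h
    have := map_dvd ev0 h
    rw [hew, he1, zero_dvd_iff] at this
    exact hxz this
  have hwp2 : ¬ w ∣ p2 := by
    intro h
    have := map_dvd ev0 h
    rw [hew, he2, zero_dvd_iff] at this
    exact hxz this
  have hp1w : ¬ p1 ∣ w := fun h => hwp1 (hp1prime.irreducible.dvd_symm hwprime.irreducible h)
  have hp2w : ¬ p2 ∣ w := fun h => hwp2 (hp2prime.irreducible.dvd_symm hwprime.irreducible h)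
  -- p2 does not divide p1
  have hp2p1 : ¬ p2 ∣ p1 := by
    intro h
    have hdvd : p2 ∣ p1 - p2 := dvd_sub h dvd_rfl
    have h1 : (C (-b') - C c' : MvPolynomial (Fin 3 ⊕ σ) ℂ) = -1 := by
      rw [← C_sub, show -b' - c' = -1 from by rw [hb'def, hc'def]; field_simp; ring]
      simp
    have heq : p1 - p2 = -w := by
      rw [hp1def, hp2def, hwdef]
      linear_combination X (Sum.inl 1) * h1
    rw [heq, dvd_neg] at hdvd
    exact hp2w hdvd
  -- divisibility through φ
  have h1 : p1 ^ Dab ∣ w ^ Dbc * M := by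
    have := map_dvd φ hDab.1
    rwa [map_pow, hφ1, hφP] at this
  have h2 : p2 ^ Dac ∣ w ^ Dbc * M := by
    have := map_dvd φ hDac.1
    rwa [map_pow, hφ2, hφP] at this
  have hM1 : p1 ^ Dab ∣ M := by
    refine hp1prime.pow_dvd_of_dvd_mul_left Dab ?_ h1
    intro h
    exact hp1w (hp1prime.dvd_of_dvd_pow h)
  have hM2 : p2 ^ Dac ∣ M := by
    refine hp2prime.pow_dvd_of_dvd_mul_left Dac ?_ h2
    intro h
    exact hp2w (hp2prime.dvd_of_dvd_pow h)
  obtain ⟨N, hN⟩ := hM1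
  have hM2' : p2 ^ Dac ∣ N := by
    refine hp2prime.pow_dvd_of_dvd_mul_left Dac ?_ (hN ▸ hM2)
    intro h
    exact hp2p1 (hp2prime.dvd_of_dvd_pow h)
  have hprod : p1 ^ Dab * p2 ^ Dac ∣ M := by
    obtain ⟨N', hN'⟩ := hM2'
    exact ⟨N', by rw [hN, hN', mul_assoc]⟩
  -- push through ev0
  have hfinal : (X (Sum.inl 0) - X (Sum.inl 2) : MvPolynomial (Fin 3 ⊕ σ) ℂ) ^ (Dab + Dac)
      ∣ Pder := by
    have := map_dvd ev0 hprod
    rw [map_mul, map_pow, map_pow, he1, he2, ← pow_add] at this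
    rw [hPder]
    exact this
  by_contra hcon
  push_neg at hcon
  exact hDabc.2 (dvd_trans (pow_dvd_pow _ (by omega)) hfinal)
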